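/- Let q = p^m be a power of a prime p, let n be a positive integer with n ≡ 2 (mod p), let a ∈ F_{q²} satisfy a^{q+1} = −1, and let L be an n×n unitary matrix over F_{q²}. Then the code generated by the n×2n block matrix G = (Jₙ − Iₙ | aL) is a Hermitian self-dual code of length 2n and F_{q²}-dimension n. -/

import Mathlib

open Matrix BigOperators Finset

/-- The Hermitian inner product `x * y = ∑ i, x i * (y i)^q` over `F_{q²}`. -/
def hermInner (q : ℕ) {F : Type} [CommRing F] {ι : Type} [Fintype ι]
    (x y : ι → F) : F :=
  ∑ i, x i * y i ^ q

/-- The Hermitian dual of a set of vectors. -/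
def hermDual (q : ℕ) {F : Type} [CommRing F] {ι : Type} [Fintype ι]
    (C : Set (ι → F)) : Set (ι → F) :=
  {y | ∀ x ∈ C, hermInner q x y = 0}

/-- The code generated by a matrix: the span of its rows. -/
def rowSpan {F : Type} [Field F] {k : ℕ} {ι : Type} (G : Matrix (Fin k) ι F) :
    Submodule F (ι → F) :=
  Submodule.span F (Set.range fun i => G i)
/-- if `n ≡ 2 (mod p)`, `a^{q+1} = -1` and `L` is an `n×n` unitary
matrix over `F_{q²}`, then the code generated by `G = (Jₙ - Iₙ | aL)` is a
Hermitian self-dual code of length `2n` and dimension `n`. -/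
theorem stmt5 (p m q n : ℕ) (hp : p.Prime) (hm : 0 < m) (hq : q = p ^ m)
    (hn : 0 < n) (hnp : (n : ZMod p) = 2)
    (F : Type) [Field F] [Fintype F] (hF : Fintype.card F = q ^ 2)
    (a : F) (ha : a ^ (q + 1) = -1)
    (L : Matrix (Fin n) (Fin n) F) (hL : L * (L.map (· ^ q))ᵀ = 1)
    (G : Matrix (Fin n) (Fin n ⊕ Fin n) F)
    (hG : ∀ i j, G i (Sum.inl j) = (if i = j then 0 else 1) ∧
      G i (Sum.inr j) = a * L i j) :
    (rowSpan G : Set (Fin n ⊕ Fin n → F)) = hermDual q (rowSpan G) ∧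
    Module.finrank F (rowSpan G) = n := by
  classical
  haveI := Fact.mk hp
  have hGl : ∀ i j, G i (Sum.inl j) = if i = j then 0 else 1 := fun i j => (hG i j).1
  have hGr : ∀ i j, G i (Sum.inr j) = a * L i j := fun i j => (hG i j).2
  have hq2 : 2 ≤ q := by
    rw [hq]
    calc 2 ≤ p := hp.two_le
    _ = p ^ 1 := (pow_one p).symm
    _ ≤ p ^ m := Nat.pow_le_pow_right hp.pos hm
  have hq0 : q ≠ 0 := by omega
  -- characteristic p
  have hpF : (p : F) = 0 := by
    have h1 : ((Fintype.card F : ℕ) : F) = 0 := FiniteField.cast_card_eq_zero F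
    rw [hF, hq, ← pow_mul] at h1
    push_cast at h1
    exact (pow_eq_zero_iff (by positivity)).mp h1
  haveI hcharF : CharP F p := (CharP.charP_iff_prime_eq_zero hp).mpr hpF
  -- n = 2 in F
  have hnF : (n : F) = 2 := by
    have h2 : ((n : ℕ) : ZMod p) = ((2 : ℕ) : ZMod p) := by exact_mod_cast hnp
    have h3 : n ≡ 2 [MOD p] := (ZMod.natCast_eq_natCast_iff n 2 p).mp h2
    calc (n : F) = ((2 : ℕ) : F) := CharP.natCast_eq_natCast' F p h3
    _ = 2 := by norm_cast
  have ha0 : a ≠ 0 := by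
    intro h
    rw [h, zero_pow (by omega)] at ha
    exact one_ne_zero (neg_eq_zero.mp ha.symm)
  -- Frobenius facts
  have hadd : ∀ x y : F, (x + y) ^ q = x ^ q + y ^ q := by
    intro x y; rw [hq]; exact add_pow_char_pow x y p m
  have hfrobinj : Function.Injective (fun x : F => x ^ q) := by
    intro x y hxy
    have hxy' : (iterateFrobenius F p m) x = (iterateFrobenius F p m) y := by
      simpa [iterateFrobenius_def, ← hq] using hxy
    exact (iterateFrobenius F p m).injective hxy'
  -- conjugation on vectors
  set cc : (Fin n ⊕ Fin n → F) → (Fin n ⊕ Fin n → F) := fun y k => y k ^ q with hcc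
  have ccinj : Function.Injective cc := fun y z h => funext fun k => hfrobinj (congrFun h k)
  have ccbij : Function.Bijective cc := Finite.injective_iff_bijective.mp ccinj
  have ccadd : ∀ y z, cc (y + z) = cc y + cc z := by
    intro y z; funext k; simp [hcc, hadd]
  have ccsmul : ∀ (s : F) y, cc (s • y) = s ^ q • cc y := by
    intro s y; funext k; simp [hcc, mul_pow]
  have cczero : cc 0 = 0 := by funext k; simp [hcc, zero_pow hq0]
  -- L is a unit
  have hUL : IsUnit L := by
    rw [Matrix.isUnit_iff_isUnit_det]
    have hdet := congrArg Matrix.det hL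
    rw [Matrix.det_mul, Matrix.det_one] at hdet
    exact IsUnit.of_mul_eq_one _ hdet
  -- entries of hL
  have hLij : ∀ i j, ∑ k, L i k * L j k ^ q = if i = j then 1 else 0 := by
    intro i j
    have h := congrFun (congrFun hL i) j
    simpa [Matrix.mul_apply, Matrix.transpose_apply, Matrix.map_apply,
      Matrix.one_apply] using h
  -- key orthogonality of rows
  have key : ∀ i j, ∑ k, G i k * G j k ^ q = 0 := by
    intro i j
    rw [Fintype.sum_sum_type]
    have hpow : ∀ (c : Prop) [Decidable c],
        (if c then (0:F) else 1) ^ q = if c then 0 else 1 := by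
      intro c _; split_ifs
      · exact zero_pow hq0
      · exact one_pow q
    have lsum : ∑ k : Fin n, G i (Sum.inl k) * G j (Sum.inl k) ^ q
        = if i = j then 1 else 0 := by
      have e1 : ∀ k : Fin n, G i (Sum.inl k) * G j (Sum.inl k) ^ q
          = 1 - (if i = k then (1:F) else 0) - (if j = k then 1 else 0)
            + (if i = k then (1:F) else 0) * (if j = k then 1 else 0) := by
        intro k
        rw [hGl, hGl, hpow]
        split_ifs <;> ring
      rw [Finset.sum_congr rfl fun k _ => e1 k]
      have e2 : ∀ k : Fin n, (if i = k then (1:F) else 0) * (if j = k then 1 else 0)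
          = if j = k then (if i = k then (1:F) else 0) else 0 := by
        intro k; split_ifs <;> ring
      rw [Finset.sum_add_distrib, Finset.sum_sub_distrib, Finset.sum_sub_distrib,
        Finset.sum_congr rfl fun k _ => e2 k, Finset.sum_ite_eq, Finset.sum_ite_eq,
        Finset.sum_ite_eq, Finset.sum_const, Finset.card_univ]
      simp [hnF]
      norm_num
    have rsum : ∑ k : Fin n, G i (Sum.inr k) * G j (Sum.inr k) ^ q
        = -(if i = j then 1 else 0) := by
      have e : ∀ k : Fin n, G i (Sum.inr k) * G j (Sum.inr k) ^ q
          = a ^ (q + 1) * (L i k * L j k ^ q) := by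
        intro k
        rw [hGr, hGr, mul_pow, pow_succ]
        ring
      rw [Finset.sum_congr rfl fun k _ => e k, ← Finset.mul_sum, hLij, ha]
      ring
    rw [lsum, rsum]
    ring
  -- membership in the dual
  have hmem1 : ∀ y, G.mulVec (cc y) = 0 → y ∈ hermDual q (rowSpan G : Set _) := by
    intro y h0 x hx
    let E : Submodule F (Fin n ⊕ Fin n → F) :=
      { carrier := {x | hermInner q x y = 0}
        add_mem' := by
          intro u v hu hv
          simp only [Set.mem_setOf_eq, hermInner] at *
          simp [Pi.add_apply, add_mul, Finset.sum_add_distrib, hu, hv]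
        zero_mem' := by simp [hermInner]
        smul_mem' := by
          intro s u hu
          simp only [Set.mem_setOf_eq, hermInner] at *
          simp [Pi.smul_apply, smul_eq_mul, mul_assoc, ← Finset.mul_sum, hu] }
    have hle : rowSpan G ≤ E := by
      rw [rowSpan, Submodule.span_le]
      rintro _ ⟨i, rfl⟩
      show hermInner q (G i) y = 0
      have := congrFun h0 i
      simpa [hermInner, Matrix.mulVec, dotProduct, hcc] using this
    exact hle hx
  have hmem2 : ∀ y, y ∈ hermDual q (rowSpan G : Set _) → G.mulVec (cc y) = 0 := by
    intro y hy
    funext i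
    have := hy (G i) (Submodule.subset_span ⟨i, rfl⟩)
    simpa [hermInner, Matrix.mulVec, dotProduct, hcc] using this
  have hDdesc : hermDual q (rowSpan G : Set _)
      = cc ⁻¹' ((LinearMap.ker (Matrix.mulVecLin G) : Submodule F _) : Set _) := by
    ext y
    constructor
    · intro hy
      simp only [Set.mem_preimage, SetLike.mem_coe, LinearMap.mem_ker]
      exact hmem2 y hy
    · intro hy
      exact hmem1 y (by simpa using hy)
  -- surjectivity of mulVecLin G
  have hsurj : Function.Surjective (Matrix.mulVecLin G) := by
    intro v
    obtain ⟨w, hw⟩ := Matrix.mulVec_surjective_iff_isUnit.mpr hUL (a⁻¹ • v)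
    refine ⟨Sum.elim 0 w, ?_⟩
    funext i
    have hw' : ∑ j, L i j * w j = a⁻¹ * v i := by
      have := congrFun hw i
      simpa [Matrix.mulVec, dotProduct] using this
    have : (Matrix.mulVecLin G) (Sum.elim 0 w) i = ∑ j, a * L i j * w j := by
      simp [Matrix.mulVecLin_apply, Matrix.mulVec, dotProduct, Fintype.sum_sum_type,
        hGl, hGr]
    rw [this]
    calc ∑ j, a * L i j * w j = a * ∑ j, L i j * w j := by
          rw [Finset.mul_sum]; exact Finset.sum_congr rfl fun j _ => by ring
    _ = a * (a⁻¹ * v i) := by rw [hw']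
    _ = v i := by field_simp
  have hker : Module.finrank F (LinearMap.ker (Matrix.mulVecLin G)) = n := by
    have h := (Matrix.mulVecLin G).finrank_range_add_finrank_ker
    rw [LinearMap.range_eq_top.mpr hsurj, finrank_top] at h
    simp only [Module.finrank_pi, Fintype.card_sum, Fintype.card_fin] at h
    omega
  -- injectivity of vecMulLinear G
  have hrowinj : Function.Injective (Matrix.vecMulLinear G) := by
    rw [← LinearMap.ker_eq_bot, LinearMap.ker_eq_bot']
    intro c hc
    have hLc : L.vecMul c = 0 := by
      funext j
      have h1 := congrFun hc (Sum.inr j)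
      simp only [Matrix.vecMulLinear_apply, Matrix.vecMul, dotProduct, hGr,
        Pi.zero_apply] at h1
      have h2 : a * ∑ i, c i * L i j = 0 := by
        rw [Finset.mul_sum]
        rw [← h1]
        exact Finset.sum_congr rfl fun i _ => by ring
      have h3 : ∑ i, c i * L i j = 0 := (mul_eq_zero.mp h2).resolve_left ha0
      simpa [Matrix.vecMul, dotProduct] using h3
    have hinj : Function.Injective L.vecMul := Matrix.vecMul_injective_iff_isUnit.mpr hUL
    have : L.vecMul c = L.vecMul 0 := by simpa using hLc
    exact hinj this
  have hrowrank : Module.finrank F (rowSpan G) = n := by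
    have hrs : rowSpan G = LinearMap.range (Matrix.vecMulLinear G) := by
      rw [range_vecMulLinear]; rfl
    rw [hrs, LinearMap.finrank_range_of_inj hrowinj]
    simp [Module.finrank_pi]
  -- inclusion
  have hincl : (rowSpan G : Set (Fin n ⊕ Fin n → F)) ⊆ hermDual q (rowSpan G : Set _) := by
    intro y hy
    apply hmem1
    let D' : Submodule F (Fin n ⊕ Fin n → F) :=
      { carrier := {z | G.mulVec (cc z) = 0}
        add_mem' := by
          intro u v hu hv
          simp only [Set.mem_setOf_eq] at *
          rw [ccadd, Matrix.mulVec_add, hu, hv, add_zero]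
        zero_mem' := by simp [Set.mem_setOf_eq, cczero]
        smul_mem' := by
          intro s u hu
          simp only [Set.mem_setOf_eq] at *
          rw [ccsmul, Matrix.mulVec_smul, hu, smul_zero] }
    have hle : rowSpan G ≤ D' := by
      rw [rowSpan, Submodule.span_le]
      rintro _ ⟨j, rfl⟩
      show G.mulVec (cc (G j)) = 0
      funext i
      simpa [Matrix.mulVec, dotProduct, hcc] using key i j
    exact hle hy
  -- cardinalities
  haveI : Fintype (rowSpan G) := Fintype.ofFinite _
  haveI : Fintype (LinearMap.ker (Matrix.mulVecLin G)) := Fintype.ofFinite _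
  have hScard : Nat.card (rowSpan G) = Fintype.card F ^ n := by
    rw [Nat.card_eq_fintype_card, Module.card_eq_pow_finrank (K := F), hrowrank]
  have hKcard : Nat.card (LinearMap.ker (Matrix.mulVecLin G)) = Fintype.card F ^ n := by
    rw [Nat.card_eq_fintype_card, Module.card_eq_pow_finrank (K := F), hker]
  have h1 : (rowSpan G : Set (Fin n ⊕ Fin n → F)).ncard = Fintype.card F ^ n := by
    rw [← Nat.card_coe_set_eq]
    exact hScard
  have h2 : (hermDual q (rowSpan G : Set (Fin n ⊕ Fin n → F))).ncard
      = Fintype.card F ^ n := by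
    rw [hDdesc, Set.ncard_preimage_of_injective_subset_range ccinj
      (by rw [Set.range_eq_univ.mpr ccbij.2]; exact Set.subset_univ _)]
    rw [← Nat.card_coe_set_eq]
    exact hKcard
  refine ⟨Set.eq_of_subset_of_ncard_le hincl (by rw [h1, h2]) (Set.toFinite _), hrowrank⟩
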